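/- arXiv:2003.04588 — 5 statements merged into one kernel-verified Lean document; each statement's English description precedes it below -/
import Mathlib

section
/- Let V be a finite-dimensional complex vector space, Ω₁₂, Ω₂₃ ∈ End(V), and κ a nonzero complex number. Suppose v ∈ V is an eigenvector of Ω₁₂ with eigenvalue λ, and for every positive integer n, λ + nκ is not an eigenvalue of Ω₁₂. Then there exists a unique formal power series solution f(x) = x^{λ/κ}(v + Σ_{n≥1} vₙ xⁿ) of the differential equation κ f'(x) = (Ω₁₂/x + Ω₂₃/(x−1)) f(x); i.e., the coefficients vₙ ∈ V exist and are uniquely determined by the recursion (Ω₁₂ − (λ + nκ)·Id) vₙ = Ω₂₃ (vₙ₋₁ + vₙ₋₂ + ⋯ + v₀) with v₀ = v. -/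
/-- Existence and uniqueness of the formal power-series (asymptotic)
solution `f(x) = x^{λ/κ}(v + Σ_{n≥1} vₙ xⁿ)` of the three-point KZ equation
`κ f' = (Ω₁₂/x + Ω₂₃/(x-1)) f`, encoded by the recursion
`(Ω₁₂ - (λ + nκ)) vₙ = Ω₂₃ (v₀ + ⋯ + v_{n-1})`, `v₀ = v`. -/
theorem stmt0 (V : Type*) [AddCommGroup V] [Module ℂ V] [FiniteDimensional ℂ V]
    (Ω₁₂ Ω₂₃ : Module.End ℂ V) (κ lam : ℂ) (hκ : κ ≠ 0) (v : V) (hv0 : v ≠ 0)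
    (hv : Ω₁₂ v = lam • v)
    (hno : ∀ n : ℕ, 0 < n → ¬ Module.End.HasEigenvalue Ω₁₂ (lam + (n : ℂ) * κ)) :
    ∃! vs : ℕ → V, vs 0 = v ∧ ∀ n : ℕ, 0 < n →
      (Ω₁₂ - (lam + (n : ℂ) * κ) • (1 : Module.End ℂ V)) (vs n)
        = Ω₂₃ (∑ k ∈ Finset.range n, vs k) := by
  classical
  set g : ℕ → Module.End ℂ V :=
    fun n => Ω₁₂ - (lam + (n : ℂ) * κ) • (1 : Module.End ℂ V) with hg
  have hunit : ∀ n : ℕ, 0 < n → IsUnit (g n) := by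
    intro n hn
    have h := hno n hn
    rw [Module.End.hasEigenvalue_iff_mem_spectrum, spectrum.mem_iff, not_not] at h
    have heq : g n = -(algebraMap ℂ (Module.End ℂ V) (lam + (n : ℂ) * κ) - Ω₁₂) := by
      rw [Algebra.algebraMap_eq_smul_one, neg_sub, hg]
    rw [heq]
    exact h.neg
  set inv : ℕ → Module.End ℂ V :=
    fun n => if h : IsUnit (g n) then ((h.unit⁻¹ : (Module.End ℂ V)ˣ) : Module.End ℂ V) else 0
    with hinv
  have hgi : ∀ n : ℕ, 0 < n → g n * inv n = 1 := by
    intro n hn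
    have h := hunit n hn
    simp only [hinv, dif_pos h]
    calc g n * ↑h.unit⁻¹ = ↑h.unit * ↑h.unit⁻¹ := by rw [h.unit_spec]
    _ = 1 := h.unit.mul_inv
  have hig : ∀ n : ℕ, 0 < n → inv n * g n = 1 := by
    intro n hn
    have h := hunit n hn
    simp only [hinv, dif_pos h]
    calc (↑h.unit⁻¹ : Module.End ℂ V) * g n = ↑h.unit⁻¹ * ↑h.unit := by rw [h.unit_spec]
    _ = 1 := h.unit.inv_mul
  -- define the sequence together with partial sums
  set p : ℕ → V × V :=
    fun n => Nat.rec (v, v)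
      (fun m ih => (inv (m + 1) (Ω₂₃ ih.2), ih.2 + inv (m + 1) (Ω₂₃ ih.2))) n with hp
  set vs : ℕ → V := fun n => (p n).1 with hvs
  have hsum : ∀ n : ℕ, (p n).2 = ∑ k ∈ Finset.range (n + 1), vs k := by
    intro n
    induction n with
    | zero => simp [hp, hvs]
    | succ m ih =>
      rw [Finset.sum_range_succ, ← ih]
  refine ⟨vs, ⟨rfl, ?_⟩, ?_⟩
  · intro n hn
    obtain ⟨m, rfl⟩ := Nat.exists_eq_add_of_lt hn
    simp only [Nat.zero_add]
    have hv1 : vs (m + 1) = inv (m + 1) (Ω₂₃ (p m).2) := rfl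
    rw [hv1, hsum m]
    have h6 : (g (m + 1) * inv (m + 1)) (Ω₂₃ (∑ k ∈ Finset.range (m + 1), vs k))
        = (1 : Module.End ℂ V) (Ω₂₃ (∑ k ∈ Finset.range (m + 1), vs k)) := by
      rw [hgi (m + 1) (Nat.succ_pos m)]
    rw [Module.End.mul_apply, Module.End.one_apply] at h6
    exact h6
  · intro ws ⟨hws0, hws⟩
    funext n
    induction n using Nat.strong_induction_on with
    | _ n ih =>
      match n with
      | 0 => simpa [hvs, hp] using hws0
      | (m + 1) =>
        have hsums : ∑ k ∈ Finset.range (m + 1), ws k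
            = ∑ k ∈ Finset.range (m + 1), vs k := by
          apply Finset.sum_congr rfl
          intro k hk
          exact ih k (Finset.mem_range.mp hk)
        have h1 := hws (m + 1) (Nat.succ_pos m)
        have h2 : g (m + 1) (vs (m + 1)) = Ω₂₃ (∑ k ∈ Finset.range (m + 1), vs k) := by
          have hv1 : vs (m + 1) = inv (m + 1) (Ω₂₃ (p m).2) := rfl
          rw [hv1, hsum m]
          have h6 : (g (m + 1) * inv (m + 1)) (Ω₂₃ (∑ k ∈ Finset.range (m + 1), vs k))
              = (1 : Module.End ℂ V) (Ω₂₃ (∑ k ∈ Finset.range (m + 1), vs k)) := by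
            rw [hgi (m + 1) (Nat.succ_pos m)]
          rw [Module.End.mul_apply, Module.End.one_apply] at h6
          exact h6
        have h3 : g (m + 1) (ws (m + 1)) = g (m + 1) (vs (m + 1)) := by
          rw [h2, h1, hsums]
        have h7 : inv (m + 1) ((g (m + 1)) (ws (m + 1)))
            = inv (m + 1) ((g (m + 1)) (vs (m + 1))) := by rw [h3]
        have h4 : (inv (m + 1) * g (m + 1)) (ws (m + 1))
            = (1 : Module.End ℂ V) (ws (m + 1)) := by rw [hig (m + 1) (Nat.succ_pos m)]
        have h5 : (inv (m + 1) * g (m + 1)) (vs (m + 1))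
            = (1 : Module.End ℂ V) (vs (m + 1)) := by rw [hig (m + 1) (Nat.succ_pos m)]
        rw [Module.End.mul_apply, Module.End.one_apply] at h4 h5
        rw [← h4, ← h5, h7]
end

section
/- On the projective gl(1|1)-module P_n, the Casimir element Ω = 2NE + ψ⁻ψ⁺ − ψ⁺ψ⁻ + E² acts nilpotently but not as zero: Ω·t = −2b ≠ 0 (in the basis t,r,l,b) and Ω² = 0 on P_n. -/
open Matrix

set_option maxHeartbeats 1000000 in
/-- On the projective module `P_n` (where `E = 0`), the Casimir
`Ω = NE + EN + ψ⁻ψ⁺ − ψ⁺ψ⁻ + E²` acts nilpotently but nontrivially: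
`Ω·t = −2b ≠ 0` and `Ω² = 0`. -/
theorem stmt6 (n : ℂ) :
    let E : Matrix (Fin 4) (Fin 4) ℂ := 0
    let Nm : Matrix (Fin 4) (Fin 4) ℂ :=
      !![n+1, 0, 0, 0; 0, n, 0, 0; 0, 0, n, 0; 0, 0, 0, n-1]
    let ψp : Matrix (Fin 4) (Fin 4) ℂ :=
      (1/2 : ℂ) • !![0, 1, 1, 0; 0, 0, 0, 1; 0, 0, 0, -1; 0, 0, 0, 0]
    let ψm : Matrix (Fin 4) (Fin 4) ℂ :=
      (1/2 : ℂ) • !![0, 0, 0, 0; -1, 0, 0, 0; 1, 0, 0, 0; 0, 1, 1, 0]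
    let Ω : Matrix (Fin 4) (Fin 4) ℂ := Nm * E + E * Nm + ψm * ψp - ψp * ψm + E * E
    let t : Fin 4 → ℂ := ![0, 1, 1, 0]
    let b : Fin 4 → ℂ := ![0, 1/2, -1/2, 0]
    Ω ≠ 0 ∧ Ω * Ω = 0 ∧ Ω.mulVec t = (-2 : ℂ) • b ∧ (-2 : ℂ) • b ≠ (0 : Fin 4 → ℂ) := by
  intro E Nm ψp ψm Ω t b
  have hΩ : Ω = !![0,0,0,0; 0,-(1/2),-(1/2),0; 0,1/2,1/2,0; 0,0,0,0] := by
    simp only [Ω, E, Nm, ψp, ψm, Matrix.mul_zero, Matrix.zero_mul, Matrix.smul_mul,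
      Matrix.mul_smul, zero_add, add_zero, smul_smul]
    ext i j
    fin_cases i <;> fin_cases j <;>
      simp [Matrix.mul_apply, Fin.sum_univ_four, Matrix.vecHead, Matrix.vecTail] <;> ring
  refine ⟨?_, ?_, ?_, ?_⟩
  · rw [hΩ]
    intro h
    have := congrFun (congrFun h 2) 1
    simp [Matrix.cons_val_one, Matrix.head_cons] at this
  · rw [hΩ]
    ext i j
    fin_cases i <;> fin_cases j <;>
      simp [Matrix.mul_apply, Fin.sum_univ_four, Matrix.vecHead, Matrix.vecTail]
  · rw [hΩ]
    ext i
    fin_cases i <;>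
      simp [Matrix.mulVec, dotProduct, Fin.sum_univ_four, t, b] <;> ring
  · intro h
    have := congrFun h 1
    simp [b] at this
end

section
/- Let e ≠ 0. Then the tensor product T_{e,n₁} ⊗ T_{−e,n₂} of two typical gl(1|1)-modules with opposite E-eigenvalues is isomorphic as a gl(1|1)-module to the 4-dimensional projective module P_{n₁+n₂}; in particular it is indecomposable (not a direct sum of two 2-dimensional modules). -/
open Matrix Kronecker

noncomputable section Gl11

def TE (e : ℂ) : Matrix (Fin 2) (Fin 2) ℂ := e • 1
def TN (n : ℂ) : Matrix (Fin 2) (Fin 2) ℂ := !![n + 1/2, 0; 0, n - 1/2]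
def Tp (e : ℂ) : Matrix (Fin 2) (Fin 2) ℂ := !![0, e; 0, 0]
def Tm : Matrix (Fin 2) (Fin 2) ℂ := !![0, 0; 1, 0]
def Par2 : Matrix (Fin 2) (Fin 2) ℂ := !![1, 0; 0, -1]

def PE : Matrix (Fin 4) (Fin 4) ℂ := 0
def PN (n : ℂ) : Matrix (Fin 4) (Fin 4) ℂ :=
  !![n+1, 0, 0, 0; 0, n, 0, 0; 0, 0, n, 0; 0, 0, 0, n-1]
def Pp : Matrix (Fin 4) (Fin 4) ℂ :=
  (1/2 : ℂ) • !![0, 1, 1, 0; 0, 0, 0, 1; 0, 0, 0, -1; 0, 0, 0, 0]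
def Pm : Matrix (Fin 4) (Fin 4) ℂ :=
  (1/2 : ℂ) • !![0, 0, 0, 0; -1, 0, 0, 0; 1, 0, 0, 0; 0, 1, 1, 0]

set_option maxHeartbeats 1600000 in
/-- For `e ≠ 0`, the graded tensor product `T_{e,n₁} ⊗ T_{−e,n₂}`
(diagonal action with Koszul signs) is isomorphic as a `gl(1|1)`-module to the
4-dimensional projective module `P_{n₁+n₂}`; in particular it is indecomposable. -/
theorem stmt8 (e n₁ n₂ : ℂ) (he : e ≠ 0) :
    ∃ Q : Matrix (Fin 4) (Fin 2 × Fin 2) ℂ,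
      (∃ Q' : Matrix (Fin 2 × Fin 2) (Fin 4) ℂ, Q * Q' = 1 ∧ Q' * Q = 1) ∧
      Q * (TE e ⊗ₖ (1 : Matrix (Fin 2) (Fin 2) ℂ) + (1 : Matrix (Fin 2) (Fin 2) ℂ) ⊗ₖ TE (-e))
        = PE * Q ∧
      Q * (TN n₁ ⊗ₖ (1 : Matrix (Fin 2) (Fin 2) ℂ) + (1 : Matrix (Fin 2) (Fin 2) ℂ) ⊗ₖ TN n₂)
        = PN (n₁ + n₂) * Q ∧
      Q * (Tp e ⊗ₖ (1 : Matrix (Fin 2) (Fin 2) ℂ) + Par2 ⊗ₖ Tp (-e)) = Pp * Q ∧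
      Q * (Tm ⊗ₖ (1 : Matrix (Fin 2) (Fin 2) ℂ) + Par2 ⊗ₖ Tm) = Pm * Q := by
  refine ⟨Matrix.of fun i p =>
      !![(![(1:ℂ),0,0,0]) i, (![(0:ℂ),-e,-e,0]) i;
         (![(0:ℂ),e-1/2,e+1/2,0]) i, (![(0:ℂ),0,0,-e]) i] p.1 p.2,
    ⟨Matrix.of fun p j =>
      !![(![(1:ℂ),0,0,0]) j, (![(0:ℂ),-(e+1/2)/e,(e-1/2)/e,0]) j;
         (![(0:ℂ),-1,1,0]) j, (![(0:ℂ),0,0,-1/e]) j] p.1 p.2, ?_, ?_⟩,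
    ?_, ?_, ?_, ?_⟩ <;>
  · ext i j
    fin_cases i <;> fin_cases j <;>
    (try simp [Matrix.mul_apply, Fintype.sum_prod_type, Fin.sum_univ_succ,
      Matrix.kroneckerMap_apply, TE, TN, Tp, Tm, Par2, PE, PN, Pp, Pm,
      Matrix.one_apply, Prod.ext_iff]) <;>
    (try field_simp) <;> ring

end Gl11
end

section
/- On the tensor product T_{e,n₁} ⊗ T_{−e,n₂} (e ≠ 0), the tensor Casimir Ω₁₂ = N⊗E + E⊗N + ψ⁻⊗ψ⁺ − ψ⁺⊗ψ⁻ + E⊗E has the single eigenvalue λ = e(n₂ − n₁) − e², and its nilpotent part (Ω₁₂ − λ·Id) is nonzero with square zero; the generalized eigenspace structure consists of two genuine eigenvectors and one Jordan block of size 2. -/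
open Matrix Kronecker

noncomputable section Gl11

/-- Tensor Casimir on `T_{e₁,n₁} ⊗ T_{e₂,n₂}` with super tensor signs. -/
def Ω₁₂ (e₁ n₁ e₂ n₂ : ℂ) : Matrix (Fin 2 × Fin 2) (Fin 2 × Fin 2) ℂ :=
  TN n₁ ⊗ₖ TE e₂ + TE e₁ ⊗ₖ TN n₂ + (Tm * Par2) ⊗ₖ Tp e₂
    - (Tp e₁ * Par2) ⊗ₖ Tm + TE e₁ ⊗ₖ TE e₂

def uu : Fin 2 × Fin 2 → ℂ := fun p => if p.1 = p.2 then 0 else 1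
def vv (e : ℂ) : Fin 2 × Fin 2 → ℂ := fun p => e * ((p.1 : ℂ) - (p.2 : ℂ))

lemma key (e n₁ n₂ : ℂ) :
    Ω₁₂ e n₁ (-e) n₂ - (e * (n₂ - n₁) - e ^ 2) • 1 = vecMulVec uu (vv e) := by
  ext ⟨i,k⟩ ⟨j,l⟩
  fin_cases i <;> fin_cases k <;> fin_cases j <;> fin_cases l <;>
    simp [Ω₁₂, TE, TN, Tp, Tm, Par2, uu, vv, Matrix.mul_apply, Fin.sum_univ_two,
      Matrix.one_apply, vecMulVec_apply, Prod.ext_iff] <;> ring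

/-- On `T_{e,n₁} ⊗ T_{−e,n₂}` (`e ≠ 0`), the tensor Casimir has the
single eigenvalue `λ = e(n₂−n₁) − e²`; its nilpotent part `Ω₁₂ − λ` is nonzero of rank 1
with square zero (two genuine eigenvectors and one Jordan block of size 2). -/
theorem stmt11 (e n₁ n₂ : ℂ) (he : e ≠ 0) :
    let lam : ℂ := e * (n₂ - n₁) - e ^ 2
    Ω₁₂ e n₁ (-e) n₂ - lam • 1 ≠ 0 ∧
    (Ω₁₂ e n₁ (-e) n₂ - lam • 1) * (Ω₁₂ e n₁ (-e) n₂ - lam • 1) = 0 ∧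
    (Ω₁₂ e n₁ (-e) n₂ - lam • 1).rank = 1 := by
  intro lam
  have hM : Ω₁₂ e n₁ (-e) n₂ - lam • 1 = vecMulVec uu (vv e) := key e n₁ n₂
  rw [hM]
  refine ⟨?_, ?_, ?_⟩
  · intro h
    have h2 := congrFun (congrFun h ((0 : Fin 2), (1 : Fin 2))) ((0 : Fin 2), (1 : Fin 2))
    simp [vecMulVec_apply, uu, vv] at h2
    exact he h2
  · ext i j
    simp [Matrix.mul_apply, vecMulVec_apply, Fintype.sum_prod_type, Fin.sum_univ_two, uu, vv]
    split_ifs <;> ring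
  · refine le_antisymm ?_ ?_
    · rw [vecMulVec_eq (Fin 1)]
      exact (Matrix.rank_mul_le_left _ _).trans
        ((Matrix.rank_le_card_width _).trans (by simp))
    · rw [Matrix.rank, Nat.one_le_iff_ne_zero, ← Nat.pos_iff_ne_zero,
        Module.finrank_pos_iff_exists_ne_zero]
      refine ⟨⟨(vecMulVec uu (vv e)).mulVecLin
        (Pi.single ((0 : Fin 2), (1 : Fin 2)) 1), LinearMap.mem_range_self _ _⟩, ?_⟩
      rw [ne_eq, Submodule.mk_eq_zero]
      intro hzero
      have h4 := congrFun hzero ((0 : Fin 2), (1 : Fin 2))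
      simp [Matrix.mulVecLin_apply, Matrix.mulVec_single, vecMulVec_apply, uu, vv] at h4
      exact he h4

end Gl11
end

section
/- The function f(z₁,z₂) = A (z₁−z₂)^{δ/κ} (u₁⊗v₂ + v₁⊗u₂) with δ = n₁e₂ + n₂e₁ + e₁e₂ solves the two-point KZ equation κ∂₁f = Ω₁₂/(z₁−z₂)·f, κ∂₂f = −Ω₁₂/(z₁−z₂)·f with values in T_{e₁,n₁}⊗T_{e₂,n₂} where e₂ = −e₁; equivalently, the vector u₁⊗v₂ + v₁⊗u₂ is an eigenvector of the tensor Casimir Ω₁₂ with eigenvalue δ. -/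
open Matrix Kronecker

noncomputable section Gl11

/-- The vector `u₁⊗v₂ + v₁⊗u₂`. -/
def wTT : Fin 2 × Fin 2 → ℂ := fun p =>
  if p = ((0 : Fin 2), (1 : Fin 2)) then 1 else if p = ((1 : Fin 2), (0 : Fin 2)) then 1 else 0

lemma eig_aux (e₁ n₁ n₂ : ℂ) :
    (Ω₁₂ e₁ n₁ (-e₁) n₂).mulVec wTT
      = (n₁ * (-e₁) + n₂ * e₁ + e₁ * (-e₁)) • wTT := by
  funext p
  obtain ⟨i, j⟩ := p
  fin_cases i <;> fin_cases j <;>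
    simp [Ω₁₂, TE, TN, Tp, Tm, Par2, wTT, mulVec, dotProduct, Fintype.sum_prod_type,
      Fin.sum_univ_two, Matrix.mul_apply, Matrix.kroneckerMap_apply, Matrix.one_apply,
      Prod.ext_iff] <;> ring

lemma scal_aux (δ κ A z : ℂ) (hκ : κ ≠ 0) (hz : z ∈ Complex.slitPlane) :
    A * (δ / κ * z ^ (δ / κ - 1) * 1) = (κ * z)⁻¹ * ((A * z ^ (δ / κ)) * δ) := by
  have hz0 : z ≠ 0 := Complex.slitPlane_ne_zero hz
  rw [Complex.cpow_sub _ _ hz0, Complex.cpow_one]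
  field_simp

/-- With `e₂ = −e₁` and `δ = n₁e₂ + n₂e₁ + e₁e₂`, the vector
`u₁⊗v₂ + v₁⊗u₂` is an eigenvector of the tensor Casimir with eigenvalue `δ`, and
`f(z₁,z₂) = A (z₁−z₂)^{δ/κ} (u₁⊗v₂ + v₁⊗u₂)` solves the two-point KZ equations
`κ∂₁f = Ω₁₂ f/(z₁−z₂)`, `κ∂₂f = −Ω₁₂ f/(z₁−z₂)`. -/
theorem stmt15 (e₁ n₁ n₂ A κ : ℂ) (he : e₁ ≠ 0) (hκ : κ ≠ 0) :
    let e₂ : ℂ := -e₁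
    let δ : ℂ := n₁ * e₂ + n₂ * e₁ + e₁ * e₂
    (Ω₁₂ e₁ n₁ e₂ n₂).mulVec wTT = δ • wTT ∧
    (∀ z₁ z₂ : ℂ, z₁ - z₂ ∈ Complex.slitPlane →
      HasDerivAt (fun z : ℂ => (A * ((z - z₂) ^ (δ / κ))) • wTT)
        ((κ * (z₁ - z₂))⁻¹ •
          (Ω₁₂ e₁ n₁ e₂ n₂).mulVec ((A * ((z₁ - z₂) ^ (δ / κ))) • wTT)) z₁) ∧
    (∀ z₁ z₂ : ℂ, z₁ - z₂ ∈ Complex.slitPlane →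
      HasDerivAt (fun z : ℂ => (A * ((z₁ - z) ^ (δ / κ))) • wTT)
        (-((κ * (z₁ - z₂))⁻¹ •
          (Ω₁₂ e₁ n₁ e₂ n₂).mulVec ((A * ((z₁ - z₂) ^ (δ / κ))) • wTT))) z₂) := by
  intro e₂ δ
  have heig := eig_aux e₁ n₁ n₂
  have hred : ∀ z₁ z₂ : ℂ,
      (κ * (z₁ - z₂))⁻¹ • (Ω₁₂ e₁ n₁ e₂ n₂).mulVec ((A * ((z₁ - z₂) ^ (δ / κ))) • wTT)
        = ((κ * (z₁ - z₂))⁻¹ * ((A * ((z₁ - z₂) ^ (δ / κ))) * δ)) • wTT := by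
    intro z₁ z₂
    rw [Matrix.mulVec_smul, heig, smul_smul, smul_smul]
    simp only [δ, e₂]
    ring_nf
  refine ⟨heig, ?_, ?_⟩
  · intro z₁ z₂ hz
    rw [hred, ← scal_aux δ κ A (z₁ - z₂) hκ hz]
    have h1 : HasDerivAt (fun z : ℂ => A * ((z - z₂) ^ (δ / κ)))
        (A * (δ / κ * (z₁ - z₂) ^ (δ / κ - 1) * 1)) z₁ := by
      exact (((hasDerivAt_id z₁).sub_const z₂).cpow_const hz).const_mul A
    exact h1.smul_const wTT
  · intro z₁ z₂ hz
    rw [hred, ← scal_aux δ κ A (z₁ - z₂) hκ hz, ← neg_smul]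
    have h1 : HasDerivAt (fun z : ℂ => A * ((z₁ - z) ^ (δ / κ)))
        (-(A * (δ / κ * (z₁ - z₂) ^ (δ / κ - 1) * 1))) z₂ := by
      have := (((hasDerivAt_id z₂).const_sub z₁).cpow_const (c := δ / κ)
        (by simpa using hz)).const_mul A
      simp only [id] at this
      refine this.congr_deriv ?_
      ring
    exact h1.smul_const wTT

end Gl11
end
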